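/- If G and H are finite groups, not both of order ≤ 2, with G and H nontrivial and at least one of order ≥ 3, then G * H is not virtually cyclic. -/

import Mathlib

open Monoid

section Aux

universe u v
variable {G : Type u} {H : Type v} [Group G] [Group H]

/-- The two-factor family, lifted to a common universe. -/
private abbrev F (G : Type u) (H : Type v) : Bool → Type (max u v) :=
  fun b => cond b (ULift.{v} G) (ULift.{u} H)

private instance : ∀ b, Group (F G H b) := fun b =>
  match b with
  | true => inferInstanceAs (Group (ULift G))
  | false => inferInstanceAs (Group (ULift H))

noncomputable local instance : ∀ b, DecidableEq (F G H b) := fun _ => Classical.decEq _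

/-- The alternating list `[g, h, g, h, ...]` of length `2m`. -/
private def altL (g : ULift.{v} G) (h : ULift.{u} H) : ℕ → List (Σ b, F G H b)
  | 0 => []
  | m + 1 => ⟨true, g⟩ :: ⟨false, h⟩ :: altL g h m

private lemma altL_mem (g : ULift.{v} G) (h : ULift.{u} H) (m : ℕ) :
    ∀ l ∈ altL g h m, l = ⟨true, g⟩ ∨ l = ⟨false, h⟩ := by
  induction m with
  | zero => simp [altL]
  | succ m ih =>
    intro l hl
    simp only [altL, List.mem_cons] at hl
    rcases hl with rfl | rfl | hl
    · exact Or.inl rfl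
    · exact Or.inr rfl
    · exact ih l hl

private lemma altL_head (g : ULift.{v} G) (h : ULift.{u} H) (m : ℕ)
    (t : List (Σ b, F G H b)) (ht : ∀ x ∈ t.head?, x.1 = true) :
    ∀ x ∈ (altL g h m ++ t).head?, x.1 = true := by
  cases m with
  | zero => simpa [altL] using ht
  | succ m => simp [altL]

private lemma altL_chain (g : ULift.{v} G) (h : ULift.{u} H) (m : ℕ)
    (t : List (Σ b, F G H b))
    (htc : t.Chain' (fun l l' => l.1 ≠ l'.1))
    (ht : ∀ x ∈ t.head?, x.1 = true) :
    (altL g h m ++ t).Chain' (fun l l' => l.1 ≠ l'.1) := by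
  induction m with
  | zero => simpa [altL]
  | succ m ih =>
    simp only [altL, List.cons_append]
    refine List.IsChain.cons (List.IsChain.cons ih ?_) (by simp)
    intro y hy
    have := altL_head g h m t ht y hy
    simp only [ne_eq]
    intro hc
    rw [← hc] at this
    simp at this

private lemma altL_prod (g : ULift.{v} G) (h : ULift.{u} H) (m : ℕ) :
    ((altL g h m).map fun l => CoprodI.of l.2).prod =
      (CoprodI.of (M := F G H) (i := true) g * CoprodI.of (M := F G H) (i := false) h) ^ m := by
  induction m with
  | zero => simp [altL]
  | succ m ih =>
    simp only [altL, List.map_cons, List.prod_cons, ih, pow_succ']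
    rw [mul_assoc]

/-- The reduced word `(g₁ h)^m (g₂ h)^n`. -/
private def altW (g₁ g₂ : ULift.{v} G) (h : ULift.{u} H)
    (hg₁ : g₁ ≠ 1) (hg₂ : g₂ ≠ 1) (hh : h ≠ 1) (m n : ℕ) :
    CoprodI.Word (F G H) where
  toList := altL g₁ h m ++ altL g₂ h n
  ne_one := by
    intro l hl
    rcases List.mem_append.mp hl with hl | hl
    · rcases altL_mem g₁ h m l hl with rfl | rfl <;> simpa
    · rcases altL_mem g₂ h n l hl with rfl | rfl <;> simpa
  chain_ne := by
    refine altL_chain g₁ h m _ ?_ ?_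
    · have := altL_chain g₂ h n [] List.isChain_nil (by simp)
      simpa using this
    · have := altL_head g₂ h n [] (by simp)
      simpa using this

private lemma altW_prod (g₁ g₂ : ULift.{v} G) (h : ULift.{u} H)
    (hg₁ : g₁ ≠ 1) (hg₂ : g₂ ≠ 1) (hh : h ≠ 1) (m n : ℕ) :
    (altW g₁ g₂ h hg₁ hg₂ hh m n).prod =
      (CoprodI.of (M := F G H) (i := true) g₁ * CoprodI.of (M := F G H) (i := false) h) ^ m *
      (CoprodI.of (M := F G H) (i := true) g₂ * CoprodI.of (M := F G H) (i := false) h) ^ n := by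
  unfold CoprodI.Word.prod altW
  rw [List.map_append, List.prod_append, altL_prod, altL_prod]

private lemma key_ne (g₁ g₂ : ULift.{v} G) (h : ULift.{u} H)
    (hg₁ : g₁ ≠ 1) (hg₂ : g₂ ≠ 1) (hh : h ≠ 1) (hne : g₁ ≠ g₂) (m n : ℕ) :
    (CoprodI.of (M := F G H) (i := true) g₁ * CoprodI.of (M := F G H) (i := false) h) ^ (m + 1) *
      (CoprodI.of (M := F G H) (i := true) g₂ * CoprodI.of (M := F G H) (i := false) h) ^ (n + 1) ≠
    (CoprodI.of (M := F G H) (i := true) g₂ * CoprodI.of (M := F G H) (i := false) h) ^ (n + 1) *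
      (CoprodI.of (M := F G H) (i := true) g₁ * CoprodI.of (M := F G H) (i := false) h) ^ (m + 1) := by
  intro hcontra
  have h1 : (altW g₁ g₂ h hg₁ hg₂ hh (m+1) (n+1)).prod
      = (altW g₂ g₁ h hg₂ hg₁ hh (n+1) (m+1)).prod := by
    rw [altW_prod, altW_prod, hcontra]
  have h2 : altW g₁ g₂ h hg₁ hg₂ hh (m+1) (n+1) = altW g₂ g₁ h hg₂ hg₁ hh (n+1) (m+1) := by
    have hinj : Function.Injective (CoprodI.Word.prod (M := F G H)) :=
      (CoprodI.Word.equiv (M := F G H)).symm.injective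
    exact hinj h1
  have h3 : (altW g₁ g₂ h hg₁ hg₂ hh (m+1) (n+1)).toList
      = (altW g₂ g₁ h hg₂ hg₁ hh (n+1) (m+1)).toList := by rw [h2]
  simp only [altW, altL, List.cons_append] at h3
  have hfst : (⟨true, g₁⟩ : Σ b, F G H b) = ⟨true, g₂⟩ := (List.cons_eq_cons.mp h3).1
  injection hfst with h1 h2
  exact hne h2

end Aux

/-- If G and H are nontrivial finite groups with |G| ≥ 3, then the free product G * H is
not virtually cyclic (it has no cyclic subgroup of finite index). -/
theorem coprod_not_virtually_cyclic (G H : Type*) [Group G] [Group H]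
    [Finite G] [Finite H] [Nontrivial G] [Nontrivial H] (hG : 3 ≤ Nat.card G) :
    ¬ ∃ L : Subgroup (Monoid.Coprod G H), L.FiniteIndex ∧ IsCyclic L := by
  rintro ⟨L, hfin, hcyc⟩
  classical
  -- find two distinct nontrivial elements of G
  obtain ⟨g₁, g₂, hg₁, hg₂, hne⟩ : ∃ g₁ g₂ : G, g₁ ≠ 1 ∧ g₂ ≠ 1 ∧ g₁ ≠ g₂ := by
    letI := Fintype.ofFinite G
    have hcard : 2 ≤ (Finset.univ.erase (1 : G)).card := by
      have h1 : (Finset.univ.erase (1 : G)).card = Fintype.card G - 1 := by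
        rw [Finset.card_erase_of_mem (Finset.mem_univ 1), Finset.card_univ]
      have h2 : 3 ≤ Fintype.card G := by rwa [← Nat.card_eq_fintype_card]
      omega
    obtain ⟨a, ha, b, hb, hab⟩ := Finset.one_lt_card.mp hcard
    exact ⟨a, b, (Finset.mem_erase.mp ha).1, (Finset.mem_erase.mp hb).1, hab⟩
  obtain ⟨h, hh⟩ := exists_ne (1 : H)
  -- the homomorphism to the indexed coproduct
  set φ : Monoid.Coprod G H →* CoprodI (F G H) :=
    Coprod.lift
      ((CoprodI.of (M := F G H) (i := true)).comp
        (MulEquiv.ulift (α := G)).symm.toMonoidHom)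
      ((CoprodI.of (M := F G H) (i := false)).comp
        (MulEquiv.ulift (α := H)).symm.toMonoidHom) with hφ
  set x : Monoid.Coprod G H := Coprod.inl g₁ * Coprod.inr h with hx
  set y : Monoid.Coprod G H := Coprod.inl g₂ * Coprod.inr h with hy
  obtain ⟨m, hm0, _, hxm⟩ := Subgroup.exists_pow_mem_of_index_ne_zero hfin.index_ne_zero x
  obtain ⟨n, hn0, _, hyn⟩ := Subgroup.exists_pow_mem_of_index_ne_zero hfin.index_ne_zero y
  -- x^m and y^n commute since L is cyclic
  letI : CommGroup L := IsCyclic.commGroup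
  have hcomm : x ^ m * y ^ n = y ^ n * x ^ m := by
    have := mul_comm (⟨x ^ m, hxm⟩ : L) ⟨y ^ n, hyn⟩
    exact congrArg Subtype.val this
  obtain ⟨m', rfl⟩ : ∃ m', m = m' + 1 := ⟨m - 1, by omega⟩
  obtain ⟨n', rfl⟩ : ∃ n', n = n' + 1 := ⟨n - 1, by omega⟩
  apply key_ne (ULift.up g₁) (ULift.up g₂) (ULift.up h)
    (by simp [ULift.ext_iff, hg₁]) (by simp [ULift.ext_iff, hg₂])
    (by simp [ULift.ext_iff, hh]) (by simp [ULift.ext_iff, hne]) m' n'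
  have := congrArg φ hcomm
  simp [hx, hy, hφ, map_pow, map_mul] at this
  exact this
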